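/- For any c in (0,1], the L^{4/3}(ℝ²) norm of the function L_c(ξ) = |ξ|²/(|ξ|⁴ + |ξ|² − c²ξ₁²) is at most 11. -/

import Mathlib

open MeasureTheory ENNReal
open Set Real Filter intervalIntegral

theorem my_lintegral_polar (f : ℝ × ℝ → ℝ≥0∞) :
    (∫⁻ p in polarCoord.target, ENNReal.ofReal p.1 * f (polarCoord.symm p)) = ∫⁻ p, f p := by
  set B : ℝ × ℝ → ℝ × ℝ →L[ℝ] ℝ × ℝ := fun p =>
    LinearMap.toContinuousLinearMap (Matrix.toLin (Module.Basis.finTwoProd ℝ) (Module.Basis.finTwoProd ℝ)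
      !![Real.cos p.2, -p.1 * Real.sin p.2; Real.sin p.2, p.1 * Real.cos p.2])
  have A : ∀ p ∈ polarCoord.target, HasFDerivWithinAt polarCoord.symm (B p) polarCoord.target p :=
    fun p _ => (hasFDerivAt_polarCoord_symm p).hasFDerivWithinAt
  have B_det : ∀ p, (B p).det = p.1 := by
    intro p
    conv_rhs => rw [← one_mul p.1, ← cos_sq_add_sin_sq p.2]
    simp only [B, neg_mul, LinearMap.det_toContinuousLinearMap, LinearMap.det_toLin,
      Matrix.det_fin_two_of, sub_neg_eq_add]
    ring
  have hmeas : MeasurableSet polarCoord.target :=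
    (measurableSet_Ioi.prod measurableSet_Ioo)
  symm
  calc ∫⁻ p, f p = ∫⁻ p in polarCoord.source, f p := by
        rw [← setLIntegral_univ]
        exact (setLIntegral_congr polarCoord_source_ae_eq_univ).symm
    _ = ∫⁻ p in polarCoord.symm '' polarCoord.target, f p := by
        rw [polarCoord.symm_image_target_eq_source]
    _ = ∫⁻ p in polarCoord.target, ENNReal.ofReal |(B p).det| * f (polarCoord.symm p) :=
        lintegral_image_eq_lintegral_abs_det_fderiv_mul volume hmeas A
          polarCoord.symm.injOn f
    _ = _ := by
        refine setLIntegral_congr_fun hmeas (fun p hp => ?_)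
        rw [B_det p, abs_of_pos hp.1]

theorem inner_radial (b : ℝ) (hb : b ≠ 0) :
    (∫⁻ r in Ioi (0:ℝ), ENNReal.ofReal (r * ((r^2 + b^2) ^ (-(4/3) : ℝ))))
      = ENNReal.ofReal ((3/2) * ((b^2 : ℝ) ^ (-(1/3) : ℝ))) := by
  have hb2 : 0 < b^2 := by positivity
  have hderiv : ∀ r : ℝ, HasDerivAt (fun r : ℝ => -(3/2) * ((r^2 + b^2) ^ (-(1/3) : ℝ)))
      (r * ((r^2 + b^2) ^ (-(4/3) : ℝ))) r := by
    intro r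
    have hpos : (0:ℝ) < r^2 + b^2 := by positivity
    have h1 : HasDerivAt (fun r : ℝ => r^2 + b^2) (2*r) r := by
      simpa using (hasDerivAt_pow 2 r).add_const (b^2)
    have h2 : HasDerivAt (fun y : ℝ => y ^ (-(1/3) : ℝ))
        ((-(1/3) : ℝ) * (r^2+b^2) ^ ((-(1/3) : ℝ) - 1)) (r^2 + b^2) :=
      Real.hasDerivAt_rpow_const (Or.inl hpos.ne')
    have h3 := (h2.comp r h1).const_mul (-(3/2) : ℝ)
    refine h3.congr_deriv ?_
    have : ((-(1/3) : ℝ) - 1 : ℝ) = -(4/3) := by norm_num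
    rw [this]
    ring
  have hnonneg : ∀ r ∈ Ioi (0:ℝ), 0 ≤ r * ((r^2 + b^2) ^ (-(4/3) : ℝ)) := by
    intro r hr
    have hpos : (0:ℝ) < r^2 + b^2 := by positivity
    exact mul_nonneg (le_of_lt hr) (Real.rpow_nonneg hpos.le _)
  have htends : Tendsto (fun r : ℝ => -(3/2) * ((r^2 + b^2) ^ (-(1/3) : ℝ)))
      atTop (nhds 0) := by
    have h1 : Tendsto (fun r : ℝ => r^2 + b^2) atTop atTop :=
      (tendsto_pow_atTop (two_ne_zero)).atTop_add tendsto_const_nhds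
    have h2 : Tendsto (fun y : ℝ => y ^ (-(1/3):ℝ)) atTop (nhds 0) :=
      tendsto_rpow_neg_atTop (by norm_num)
    have := (h2.comp h1).const_mul (-(3/2) : ℝ)
    simpa using this
  have hderiv' : ∀ r ∈ Ici (0:ℝ), HasDerivAt (fun r : ℝ => -(3/2) * ((r^2 + b^2) ^ (-(1/3) : ℝ)))
      (r * ((r^2 + b^2) ^ (-(4/3) : ℝ))) r := fun r _ => hderiv r
  have hint : IntegrableOn (fun r : ℝ => r * ((r^2 + b^2) ^ (-(4/3) : ℝ))) (Ioi 0) volume :=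
    integrableOn_Ioi_deriv_of_nonneg' hderiv' hnonneg htends
  have hval : ∫ r in Ioi (0:ℝ), r * ((r^2 + b^2) ^ (-(4/3) : ℝ))
      = (3/2) * ((b^2 : ℝ) ^ (-(1/3) : ℝ)) := by
    rw [integral_Ioi_of_hasDerivAt_of_nonneg' hderiv' hnonneg htends]
    norm_num
  rw [← hval, ← ofReal_integral_eq_lintegral_ofReal hint]
  exact (ae_restrict_iff' measurableSet_Ioi).2 (Filter.Eventually.of_forall hnonneg)

theorem my_sin_lb {x : ℝ} (h0 : 0 ≤ x) (h1 : x ≤ 3/4) : (8842/10000) * x ≤ Real.sin x := by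
  have hb := Real.sin_bound (x := x) (by rw [abs_of_nonneg h0]; linarith)
  rw [abs_of_nonneg h0] at hb
  have h2 := (abs_le.1 hb).1
  nlinarith [sq_nonneg x, sq_nonneg (x - 3/4), mul_nonneg h0 h0,
    mul_nonneg (mul_nonneg h0 h0) h0, mul_nonneg (mul_nonneg (mul_nonneg h0 h0) h0) h0]

theorem my_sin_a : (663/1000 : ℝ) ≤ Real.sin (3/4) := by
  have := my_sin_lb (x := 3/4) (by norm_num) (le_refl _)
  linarith

theorem my_sin_mid {θ : ℝ} (h1 : 3/4 ≤ θ) (h2 : θ ≤ π - 3/4) : (663/1000 : ℝ) ≤ Real.sin θ := by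
  have hpi : (3.141592 : ℝ) < π := Real.pi_gt_d6
  have hmono := Real.strictMonoOn_sin.monotoneOn
  refine le_trans my_sin_a ?_
  rcases le_total θ (π/2) with h | h
  · exact hmono ⟨by linarith, by linarith⟩ ⟨by linarith, by linarith⟩ h1
  · nth_rewrite 2 [← Real.sin_pi_sub]
    exact hmono ⟨by linarith, by linarith⟩ ⟨by linarith, by linarith⟩ (by linarith)

theorem my_X_bound :
    ((((8842/10000:ℝ))^2) ^ (-(1/3):ℝ)) * ((3/4:ℝ) ^ ((1/3):ℝ)) ≤ 9863/10000 := by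
  set X := ((((8842/10000:ℝ))^2) ^ (-(1/3):ℝ)) * ((3/4:ℝ) ^ ((1/3):ℝ)) with hX
  have hcube : X ^ (3:ℕ) = (3/4) / ((8842/10000:ℝ))^2 := by
    rw [hX, mul_pow, ← Real.rpow_natCast (((8842/10000:ℝ)^2) ^ (-(1/3):ℝ)) 3,
      ← Real.rpow_natCast ((3/4:ℝ) ^ ((1/3):ℝ)) 3,
      ← Real.rpow_mul (by positivity), ← Real.rpow_mul (by norm_num),
      show (-(1/3) * ((3:ℕ):ℝ)) = -1 by push_cast; norm_num,
      show ((1/3) * ((3:ℕ):ℝ)) = 1 by push_cast; norm_num,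
      Real.rpow_neg_one, Real.rpow_one]
    ring
  refine le_of_pow_le_pow_left₀ (n := 3) (by norm_num) (by norm_num) ?_
  rw [hcube]; norm_num

theorem my_Ks_bound : (((663/1000:ℝ))^2) ^ (-(1/3):ℝ) ≤ 13153/10000 := by
  set X := (((663/1000:ℝ))^2) ^ (-(1/3):ℝ) with hX
  have hcube : X ^ (3:ℕ) = 1 / ((663/1000:ℝ))^2 := by
    rw [hX, ← Real.rpow_natCast ((((663/1000:ℝ))^2) ^ (-(1/3):ℝ)) 3,
      ← Real.rpow_mul (by positivity),
      show (-(1/3) * ((3:ℕ):ℝ)) = -1 by push_cast; norm_num,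
      Real.rpow_neg_one]
    ring
  refine le_of_pow_le_pow_left₀ (n := 3) (by norm_num) (by norm_num) ?_
  rw [hcube]; norm_num

-- u x = (x^2) ^ (-1/3)
theorem my_u_eqOn : EqOn (fun x : ℝ => x ^ (-(2/3):ℝ)) (fun x : ℝ => ((x^2:ℝ)) ^ (-(1/3):ℝ))
    (Icc (0:ℝ) (3/4)) := by
  intro x hx
  rcases eq_or_lt_of_le hx.1 with h | h
  · simp only [← h]
    norm_num [Real.zero_rpow]
  · simp only
    rw [← Real.rpow_natCast x 2, ← Real.rpow_mul h.le]
    norm_num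

theorem my_u_intOn : IntegrableOn (fun x : ℝ => ((x^2:ℝ)) ^ (-(1/3):ℝ)) (Ioc (0:ℝ) (3/4)) := by
  have h := (intervalIntegrable_rpow' (a := 0) (b := 3/4) (r := -(2/3)) (by norm_num)).1
  exact h.congr_fun (fun x hx => my_u_eqOn ⟨hx.1.le, hx.2⟩) measurableSet_Ioc

theorem my_u_ii : IntervalIntegrable (fun x : ℝ => ((x^2:ℝ)) ^ (-(1/3):ℝ)) volume 0 (3/4) := by
  constructor
  · exact my_u_intOn
  · rw [Ioc_eq_empty (by norm_num)]; exact integrableOn_empty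

theorem my_u_val : ∫ x in (0:ℝ)..(3/4), ((x^2:ℝ)) ^ (-(1/3):ℝ)
    = 3 * ((3/4:ℝ) ^ ((1/3):ℝ)) := by
  have he : EqOn (fun x : ℝ => ((x^2:ℝ)) ^ (-(1/3):ℝ)) (fun x : ℝ => x ^ (-(2/3):ℝ))
      (uIcc (0:ℝ) (3/4)) := by
    rw [uIcc_of_le (by norm_num : (0:ℝ) ≤ 3/4)]
    exact my_u_eqOn.symm
  rw [intervalIntegral.integral_congr he,
    integral_rpow (Or.inl (by norm_num : (-1:ℝ) < -(2/3)))]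
  norm_num [Real.zero_rpow]
  ring

theorem my_piece1 (I : ℝ → ℝ≥0∞)
    (hI : ∀ θ : ℝ, Real.sin θ ≠ 0 →
      I θ = ENNReal.ofReal ((3/2) * ((Real.sin θ^2 : ℝ) ^ (-(1/3):ℝ)))) :
    ∫⁻ θ in Ioo (-π) (-π + 3/4), I θ ≤ ENNReal.ofReal (44384/10000) := by
  have hKnn : (0:ℝ) ≤ (((8842/10000:ℝ))^2) ^ (-(1/3):ℝ) := Real.rpow_nonneg (by positivity) _
  have hpt : ∀ θ ∈ Ioo (-π) (-π + 3/4), I θ ≤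
      ENNReal.ofReal ((3/2 * ((((8842/10000:ℝ))^2) ^ (-(1/3):ℝ)))
        * ((((θ+π)^2:ℝ)) ^ (-(1/3):ℝ))) := by
    intro θ hθ
    have hu0 : 0 < θ + π := by linarith [hθ.1]
    have hu1 : θ + π ≤ 3/4 := by linarith [hθ.2]
    have hsin : (8842/10000) * (θ + π) ≤ Real.sin (θ + π) := my_sin_lb hu0.le hu1
    have hsq : ((8842/10000:ℝ))^2 * (θ+π)^2 ≤ Real.sin θ ^ 2 := by
      have h : Real.sin θ ^ 2 = Real.sin (θ + π) ^ 2 := by rw [Real.sin_add_pi]; ring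
      rw [h]; nlinarith
    have hspos : 0 < Real.sin θ ^ 2 := lt_of_lt_of_le (by positivity) hsq
    have hsne : Real.sin θ ≠ 0 := fun h => by simp [h] at hspos
    rw [hI θ hsne]
    apply ENNReal.ofReal_le_ofReal
    have h1 : (Real.sin θ ^2 : ℝ) ^ (-(1/3):ℝ)
        ≤ ((((8842/10000:ℝ))^2 * (θ+π)^2 : ℝ)) ^ (-(1/3):ℝ) :=
      Real.rpow_le_rpow_of_nonpos (by positivity) hsq (by norm_num)
    have h2 : ((((8842/10000:ℝ))^2 * (θ+π)^2 : ℝ)) ^ (-(1/3):ℝ)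
        = (((8842/10000:ℝ))^2) ^ (-(1/3):ℝ) * ((((θ+π)^2:ℝ)) ^ (-(1/3):ℝ)) :=
      Real.mul_rpow (by positivity) (by positivity)
    rw [h2] at h1
    nlinarith [Real.rpow_nonneg (sq_nonneg (θ+π)) (-(1/3):ℝ)]
  have hint : IntegrableOn
      (fun θ : ℝ => (3/2 * ((((8842/10000:ℝ))^2) ^ (-(1/3):ℝ))) * ((((θ+π)^2:ℝ)) ^ (-(1/3):ℝ)))
      (Ioo (-π) (-π + 3/4)) := by
    have hbase := (my_u_ii.comp_add_right π).1
    have hsub : Ioo (-π) (-π + 3/4) ⊆ Ioc (0 - π) (3/4 - π) := by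
      intro x hx; exact ⟨by linarith [hx.1], by linarith [hx.2]⟩
    exact ((hbase.mono_set hsub).const_mul _)
  have hval : ∫ θ in Ioo (-π) (-π + 3/4),
      (3/2 * ((((8842/10000:ℝ))^2) ^ (-(1/3):ℝ))) * ((((θ+π)^2:ℝ)) ^ (-(1/3):ℝ))
      = (3/2 * ((((8842/10000:ℝ))^2) ^ (-(1/3):ℝ))) * (3 * ((3/4:ℝ) ^ ((1/3):ℝ))) := by
    rw [MeasureTheory.integral_const_mul]
    congr 1
    rw [← MeasureTheory.integral_Ioc_eq_integral_Ioo,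
      ← intervalIntegral.integral_of_le (by linarith : -π ≤ -π + 3/4)]
    have h := intervalIntegral.integral_comp_add_right
      (a := -π) (b := -π + 3/4) (fun x : ℝ => ((x^2:ℝ)) ^ (-(1/3):ℝ)) π
    rw [h, show -π + π = (0:ℝ) by ring, show -π + 3/4 + π = (3/4:ℝ) by ring]
    exact my_u_val
  calc ∫⁻ θ in Ioo (-π) (-π + 3/4), I θ
      ≤ ∫⁻ θ in Ioo (-π) (-π + 3/4), ENNReal.ofReal
          ((3/2 * ((((8842/10000:ℝ))^2) ^ (-(1/3):ℝ))) * ((((θ+π)^2:ℝ)) ^ (-(1/3):ℝ))) :=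
        lintegral_mono_ae ((ae_restrict_iff' measurableSet_Ioo).2 (.of_forall hpt))
    _ = ENNReal.ofReal (∫ θ in Ioo (-π) (-π + 3/4),
          (3/2 * ((((8842/10000:ℝ))^2) ^ (-(1/3):ℝ))) * ((((θ+π)^2:ℝ)) ^ (-(1/3):ℝ))) := by
        rw [← ofReal_integral_eq_lintegral_ofReal hint]
        exact (ae_restrict_iff' measurableSet_Ioo).2 (.of_forall fun θ _ => by positivity)
    _ ≤ ENNReal.ofReal (44384/10000) := by
        rw [hval]
        apply ENNReal.ofReal_le_ofReal
        nlinarith [my_X_bound, hKnn, Real.rpow_nonneg (by norm_num : (0:ℝ) ≤ 3/4) ((1/3):ℝ)]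

theorem my_piece5 (I : ℝ → ℝ≥0∞)
    (hI : ∀ θ : ℝ, Real.sin θ ≠ 0 →
      I θ = ENNReal.ofReal ((3/2) * ((Real.sin θ^2 : ℝ) ^ (-(1/3):ℝ)))) :
    ∫⁻ θ in Ioo (π - 3/4) π, I θ ≤ ENNReal.ofReal (44384/10000) := by
  have hKnn : (0:ℝ) ≤ (((8842/10000:ℝ))^2) ^ (-(1/3):ℝ) := Real.rpow_nonneg (by positivity) _
  have hpt : ∀ θ ∈ Ioo (π - 3/4) π, I θ ≤
      ENNReal.ofReal ((3/2 * ((((8842/10000:ℝ))^2) ^ (-(1/3):ℝ)))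
        * ((((π-θ)^2:ℝ)) ^ (-(1/3):ℝ))) := by
    intro θ hθ
    have hu0 : 0 < π - θ := by linarith [hθ.2]
    have hu1 : π - θ ≤ 3/4 := by linarith [hθ.1]
    have hsin : (8842/10000) * (π - θ) ≤ Real.sin (π - θ) := my_sin_lb hu0.le hu1
    have hsq : ((8842/10000:ℝ))^2 * (π-θ)^2 ≤ Real.sin θ ^ 2 := by
      have h : Real.sin θ ^ 2 = Real.sin (π - θ) ^ 2 := by rw [Real.sin_pi_sub]
      rw [h]; nlinarith
    have hspos : 0 < Real.sin θ ^ 2 := lt_of_lt_of_le (by positivity) hsq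
    have hsne : Real.sin θ ≠ 0 := fun h => by simp [h] at hspos
    rw [hI θ hsne]
    apply ENNReal.ofReal_le_ofReal
    have h1 : (Real.sin θ ^2 : ℝ) ^ (-(1/3):ℝ)
        ≤ ((((8842/10000:ℝ))^2 * (π-θ)^2 : ℝ)) ^ (-(1/3):ℝ) :=
      Real.rpow_le_rpow_of_nonpos (by positivity) hsq (by norm_num)
    have h2 : ((((8842/10000:ℝ))^2 * (π-θ)^2 : ℝ)) ^ (-(1/3):ℝ)
        = (((8842/10000:ℝ))^2) ^ (-(1/3):ℝ) * ((((π-θ)^2:ℝ)) ^ (-(1/3):ℝ)) :=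
      Real.mul_rpow (by positivity) (by positivity)
    rw [h2] at h1
    nlinarith [Real.rpow_nonneg (sq_nonneg (π-θ)) (-(1/3):ℝ)]
  have hint : IntegrableOn
      (fun θ : ℝ => (3/2 * ((((8842/10000:ℝ))^2) ^ (-(1/3):ℝ))) * ((((π-θ)^2:ℝ)) ^ (-(1/3):ℝ)))
      (Ioo (π - 3/4) π) := by
    have hbase := (my_u_ii.comp_sub_left π).2
    have hsub : Ioo (π - 3/4) π ⊆ Ioc (π - 3/4) (π - 0) := by
      intro x hx; exact ⟨hx.1, by linarith [hx.2]⟩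
    exact ((hbase.mono_set hsub).const_mul _)
  have hval : ∫ θ in Ioo (π - 3/4) π,
      (3/2 * ((((8842/10000:ℝ))^2) ^ (-(1/3):ℝ))) * ((((π-θ)^2:ℝ)) ^ (-(1/3):ℝ))
      = (3/2 * ((((8842/10000:ℝ))^2) ^ (-(1/3):ℝ))) * (3 * ((3/4:ℝ) ^ ((1/3):ℝ))) := by
    rw [MeasureTheory.integral_const_mul]
    congr 1
    rw [← MeasureTheory.integral_Ioc_eq_integral_Ioo,
      ← intervalIntegral.integral_of_le (by linarith [Real.pi_gt_three] : π - 3/4 ≤ π)]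
    have h := intervalIntegral.integral_comp_sub_left
      (a := π - 3/4) (b := π) (fun x : ℝ => ((x^2:ℝ)) ^ (-(1/3):ℝ)) π
    rw [h, show π - π = (0:ℝ) by ring, show π - (π - 3/4) = (3/4:ℝ) by ring]
    exact my_u_val
  calc ∫⁻ θ in Ioo (π - 3/4) π, I θ
      ≤ ∫⁻ θ in Ioo (π - 3/4) π, ENNReal.ofReal
          ((3/2 * ((((8842/10000:ℝ))^2) ^ (-(1/3):ℝ))) * ((((π-θ)^2:ℝ)) ^ (-(1/3):ℝ))) :=
        lintegral_mono_ae ((ae_restrict_iff' measurableSet_Ioo).2 (.of_forall hpt))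
    _ = ENNReal.ofReal (∫ θ in Ioo (π - 3/4) π,
          (3/2 * ((((8842/10000:ℝ))^2) ^ (-(1/3):ℝ))) * ((((π-θ)^2:ℝ)) ^ (-(1/3):ℝ))) := by
        rw [← ofReal_integral_eq_lintegral_ofReal hint]
        exact (ae_restrict_iff' measurableSet_Ioo).2 (.of_forall fun θ _ => by positivity)
    _ ≤ ENNReal.ofReal (44384/10000) := by
        rw [hval]
        apply ENNReal.ofReal_le_ofReal
        nlinarith [my_X_bound, hKnn, Real.rpow_nonneg (by norm_num : (0:ℝ) ≤ 3/4) ((1/3):ℝ)]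

theorem my_const_pt {θ : ℝ} (h : (663/1000:ℝ) ≤ Real.sin θ ∨ (663/1000:ℝ) ≤ Real.sin (-θ))
    (I : ℝ → ℝ≥0∞)
    (hI : ∀ θ : ℝ, Real.sin θ ≠ 0 →
      I θ = ENNReal.ofReal ((3/2) * ((Real.sin θ^2 : ℝ) ^ (-(1/3):ℝ)))) :
    I θ ≤ ENNReal.ofReal ((3/2) * (13153/10000)) := by
  have hsq : ((663/1000:ℝ))^2 ≤ Real.sin θ ^ 2 := by
    rcases h with h | h
    · nlinarith
    · rw [Real.sin_neg] at h; nlinarith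
  have hspos : 0 < Real.sin θ ^ 2 := lt_of_lt_of_le (by positivity) hsq
  have hsne : Real.sin θ ≠ 0 := fun h0 => by simp [h0] at hspos
  rw [hI θ hsne]
  apply ENNReal.ofReal_le_ofReal
  have h1 : (Real.sin θ ^2 : ℝ) ^ (-(1/3):ℝ) ≤ ((((663/1000:ℝ))^2 : ℝ)) ^ (-(1/3):ℝ) :=
    Real.rpow_le_rpow_of_nonpos (by positivity) hsq (by norm_num)
  have h2 := my_Ks_bound
  linarith

theorem my_piece2 (I : ℝ → ℝ≥0∞)
    (hI : ∀ θ : ℝ, Real.sin θ ≠ 0 →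
      I θ = ENNReal.ofReal ((3/2) * ((Real.sin θ^2 : ℝ) ^ (-(1/3):ℝ)))) :
    ∫⁻ θ in Icc (-π + 3/4) (-(3/4)), I θ ≤ ENNReal.ofReal (32388/10000) := by
  have hpi : (3.141592 : ℝ) < π := Real.pi_gt_d6
  have hpi' : π < 3.141593 := Real.pi_lt_d6
  have hpt : ∀ θ ∈ Icc (-π + 3/4) (-(3/4)), I θ ≤ ENNReal.ofReal ((3/2) * (13153/10000)) := by
    intro θ hθ
    refine my_const_pt (Or.inr (my_sin_mid ?_ ?_)) I hI
    · linarith [hθ.2]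
    · linarith [hθ.1]
  calc ∫⁻ θ in Icc (-π + 3/4) (-(3/4)), I θ
      ≤ ∫⁻ _ in Icc (-π + 3/4) (-(3/4)), ENNReal.ofReal ((3/2) * (13153/10000)) :=
        lintegral_mono_ae ((ae_restrict_iff' measurableSet_Icc).2 (.of_forall hpt))
    _ = ENNReal.ofReal ((3/2) * (13153/10000)) * volume (Icc (-π + 3/4) (-(3/4):ℝ)) :=
        setLIntegral_const _ _
    _ ≤ ENNReal.ofReal (32388/10000) := by
        rw [Real.volume_Icc, ← ENNReal.ofReal_mul (by norm_num)]
        apply ENNReal.ofReal_le_ofReal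
        nlinarith

theorem my_piece4 (I : ℝ → ℝ≥0∞)
    (hI : ∀ θ : ℝ, Real.sin θ ≠ 0 →
      I θ = ENNReal.ofReal ((3/2) * ((Real.sin θ^2 : ℝ) ^ (-(1/3):ℝ)))) :
    ∫⁻ θ in Icc (3/4) (π - 3/4), I θ ≤ ENNReal.ofReal (32388/10000) := by
  have hpi : (3.141592 : ℝ) < π := Real.pi_gt_d6
  have hpi' : π < 3.141593 := Real.pi_lt_d6
  have hpt : ∀ θ ∈ Icc (3/4:ℝ) (π - 3/4), I θ ≤ ENNReal.ofReal ((3/2) * (13153/10000)) :=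
    fun θ hθ => my_const_pt (Or.inl (my_sin_mid hθ.1 hθ.2)) I hI
  calc ∫⁻ θ in Icc (3/4:ℝ) (π - 3/4), I θ
      ≤ ∫⁻ _ in Icc (3/4:ℝ) (π - 3/4), ENNReal.ofReal ((3/2) * (13153/10000)) :=
        lintegral_mono_ae ((ae_restrict_iff' measurableSet_Icc).2 (.of_forall hpt))
    _ = ENNReal.ofReal ((3/2) * (13153/10000)) * volume (Icc (3/4:ℝ) (π - 3/4)) :=
        setLIntegral_const _ _
    _ ≤ ENNReal.ofReal (32388/10000) := by
        rw [Real.volume_Icc, ← ENNReal.ofReal_mul (by norm_num)]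
        apply ENNReal.ofReal_le_ofReal
        nlinarith

theorem my_piece3 (I : ℝ → ℝ≥0∞)
    (hI : ∀ θ : ℝ, Real.sin θ ≠ 0 →
      I θ = ENNReal.ofReal ((3/2) * ((Real.sin θ^2 : ℝ) ^ (-(1/3):ℝ)))) :
    ∫⁻ θ in Ioc (-(3/4)) (3/4), I θ ≤ ENNReal.ofReal (88767/10000) := by
  have hKnn : (0:ℝ) ≤ (((8842/10000:ℝ))^2) ^ (-(1/3):ℝ) := Real.rpow_nonneg (by positivity) _
  have hpt : ∀ θ ∈ Ioc (-(3/4):ℝ) (3/4), θ ≠ 0 → I θ ≤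
      ENNReal.ofReal ((3/2 * ((((8842/10000:ℝ))^2) ^ (-(1/3):ℝ))) * (((θ^2:ℝ)) ^ (-(1/3):ℝ))) := by
    intro θ hθ hne
    have hsq : ((8842/10000:ℝ))^2 * θ^2 ≤ Real.sin θ ^ 2 := by
      rcases lt_or_gt_of_ne hne with h | h
      · have hsin : (8842/10000) * (-θ) ≤ Real.sin (-θ) :=
          my_sin_lb (by linarith) (by linarith [hθ.1])
        rw [Real.sin_neg] at hsin
        nlinarith
      · have hsin : (8842/10000) * θ ≤ Real.sin θ := my_sin_lb h.le hθ.2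
        nlinarith
    have hspos : 0 < Real.sin θ ^ 2 :=
      lt_of_lt_of_le (by positivity) hsq
    have hsne : Real.sin θ ≠ 0 := fun h0 => by simp [h0] at hspos
    rw [hI θ hsne]
    apply ENNReal.ofReal_le_ofReal
    have h1 : (Real.sin θ ^2 : ℝ) ^ (-(1/3):ℝ)
        ≤ ((((8842/10000:ℝ))^2 * θ^2 : ℝ)) ^ (-(1/3):ℝ) :=
      Real.rpow_le_rpow_of_nonpos (by positivity) hsq (by norm_num)
    have h2 : ((((8842/10000:ℝ))^2 * θ^2 : ℝ)) ^ (-(1/3):ℝ)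
        = (((8842/10000:ℝ))^2) ^ (-(1/3):ℝ) * (((θ^2:ℝ)) ^ (-(1/3):ℝ)) :=
      Real.mul_rpow (by positivity) (by positivity)
    rw [h2] at h1
    nlinarith [Real.rpow_nonneg (sq_nonneg θ) (-(1/3):ℝ)]
  -- integrability on Ioc (-(3/4)) 0
  have hIntNeg : IntegrableOn (fun x : ℝ => ((x^2:ℝ)) ^ (-(1/3):ℝ)) (Ioc (-(3/4):ℝ) 0) := by
    have h := (my_u_ii.comp_sub_left 0).2
    have he : EqOn (fun x : ℝ => (((0 - x)^2:ℝ)) ^ (-(1/3):ℝ))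
        (fun x : ℝ => ((x^2:ℝ)) ^ (-(1/3):ℝ)) (Ioc (0 - 3/4 : ℝ) (0 - 0)) := by
      intro x _; simp only; rw [show ((0:ℝ) - x)^2 = x^2 by ring]
    have h2 := h.congr_fun he measurableSet_Ioc
    have : Ioc (0 - 3/4 : ℝ) (0 - 0) = Ioc (-(3/4):ℝ) 0 := by norm_num
    rwa [this] at h2
  have hiiNeg : IntervalIntegrable (fun x : ℝ => ((x^2:ℝ)) ^ (-(1/3):ℝ)) volume (-(3/4)) 0 := by
    constructor
    · exact hIntNeg
    · rw [Ioc_eq_empty (by norm_num)]; exact integrableOn_empty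
  have hvalNeg : ∫ x in (-(3/4):ℝ)..0, ((x^2:ℝ)) ^ (-(1/3):ℝ) = 3 * ((3/4:ℝ) ^ ((1/3):ℝ)) := by
    have he : EqOn (fun x : ℝ => ((x^2:ℝ)) ^ (-(1/3):ℝ))
        (fun x : ℝ => (((-x)^2:ℝ)) ^ (-(1/3):ℝ)) (uIcc (-(3/4):ℝ) 0) := by
      intro x _; simp only; rw [show (-x:ℝ)^2 = x^2 by ring]
    rw [intervalIntegral.integral_congr he, intervalIntegral.integral_comp_neg
      (fun x : ℝ => ((x^2:ℝ)) ^ (-(1/3):ℝ))]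
    rw [show -(0:ℝ) = 0 by ring, show -(-(3/4):ℝ) = 3/4 by ring]
    exact my_u_val
  have hint : IntegrableOn
      (fun θ : ℝ => (3/2 * ((((8842/10000:ℝ))^2) ^ (-(1/3):ℝ))) * (((θ^2:ℝ)) ^ (-(1/3):ℝ)))
      (Ioc (-(3/4):ℝ) (3/4)) := by
    have hsub : Ioc (-(3/4):ℝ) (3/4) ⊆ Ioc (-(3/4):ℝ) 0 ∪ Ioc (0:ℝ) (3/4) := by
      intro x hx
      rcases le_or_gt x 0 with h | h
      · exact Or.inl ⟨hx.1, h⟩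
      · exact Or.inr ⟨h, hx.2⟩
    exact ((hIntNeg.union my_u_intOn).mono_set hsub).const_mul _
  have hval : ∫ θ in Ioc (-(3/4):ℝ) (3/4),
      (3/2 * ((((8842/10000:ℝ))^2) ^ (-(1/3):ℝ))) * (((θ^2:ℝ)) ^ (-(1/3):ℝ))
      = (3/2 * ((((8842/10000:ℝ))^2) ^ (-(1/3):ℝ))) * (6 * ((3/4:ℝ) ^ ((1/3):ℝ))) := by
    rw [MeasureTheory.integral_const_mul]
    congr 1
    rw [← intervalIntegral.integral_of_le (by norm_num : (-(3/4):ℝ) ≤ 3/4),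
      ← intervalIntegral.integral_add_adjacent_intervals hiiNeg my_u_ii,
      hvalNeg, my_u_val]
    ring
  have hne : ∀ᵐ θ : ℝ ∂volume, θ ≠ 0 := by
    rw [ae_iff]
    have h0 : {a : ℝ | ¬a ≠ 0} = {0} := by ext x; simp
    rw [h0, Real.volume_singleton]
  calc ∫⁻ θ in Ioc (-(3/4):ℝ) (3/4), I θ
      ≤ ∫⁻ θ in Ioc (-(3/4):ℝ) (3/4), ENNReal.ofReal
          ((3/2 * ((((8842/10000:ℝ))^2) ^ (-(1/3):ℝ))) * (((θ^2:ℝ)) ^ (-(1/3):ℝ))) := by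
        refine lintegral_mono_ae ?_
        have h1 : ∀ᵐ θ ∂(volume.restrict (Ioc (-(3/4):ℝ) (3/4))),
            θ ∈ Ioc (-(3/4):ℝ) (3/4) := ae_restrict_mem measurableSet_Ioc
        have h2 : ∀ᵐ θ ∂(volume.restrict (Ioc (-(3/4):ℝ) (3/4))), θ ≠ (0:ℝ) :=
          ae_restrict_of_ae hne
        exact (h1.and h2).mono fun θ h => hpt θ h.1 h.2
    _ = ENNReal.ofReal (∫ θ in Ioc (-(3/4):ℝ) (3/4),
          (3/2 * ((((8842/10000:ℝ))^2) ^ (-(1/3):ℝ))) * (((θ^2:ℝ)) ^ (-(1/3):ℝ))) := by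
        rw [← ofReal_integral_eq_lintegral_ofReal hint]
        exact (ae_restrict_iff' measurableSet_Ioc).2 (.of_forall fun θ _ => by positivity)
    _ ≤ ENNReal.ofReal (88767/10000) := by
        rw [hval]
        apply ENNReal.ofReal_le_ofReal
        nlinarith [my_X_bound, hKnn, Real.rpow_nonneg (by norm_num : (0:ℝ) ≤ 3/4) ((1/3):ℝ)]

theorem my_theta_total (I : ℝ → ℝ≥0∞)
    (hI : ∀ θ : ℝ, Real.sin θ ≠ 0 →
      I θ = ENNReal.ofReal ((3/2) * ((Real.sin θ^2 : ℝ) ^ (-(1/3):ℝ)))) :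
    ∫⁻ θ in Ioo (-π) π, I θ ≤ ENNReal.ofReal (244/10) := by
  have hpi : (3.141592 : ℝ) < π := Real.pi_gt_d6
  have hsub : Ioo (-π) π ⊆
      Ioo (-π) (-π + 3/4) ∪ (Icc (-π + 3/4) (-(3/4)) ∪ (Ioc (-(3/4)) (3/4) ∪
        (Icc (3/4) (π - 3/4) ∪ Ioo (π - 3/4) π))) := by
    intro θ hθ
    rcases lt_or_ge θ (-π + 3/4) with h1 | h1
    · exact Or.inl ⟨hθ.1, h1⟩
    rcases le_or_gt θ (-(3/4)) with h2 | h2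
    · exact Or.inr (Or.inl ⟨h1, h2⟩)
    rcases le_or_gt θ (3/4) with h3 | h3
    · exact Or.inr (Or.inr (Or.inl ⟨h2, h3⟩))
    rcases le_or_gt θ (π - 3/4) with h4 | h4
    · exact Or.inr (Or.inr (Or.inr (Or.inl ⟨h3.le, h4⟩)))
    · exact Or.inr (Or.inr (Or.inr (Or.inr ⟨h4, hθ.2⟩)))
  calc ∫⁻ θ in Ioo (-π) π, I θ
      ≤ ∫⁻ θ in Ioo (-π) (-π + 3/4) ∪ (Icc (-π + 3/4) (-(3/4)) ∪ (Ioc (-(3/4)) (3/4) ∪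
          (Icc (3/4) (π - 3/4) ∪ Ioo (π - 3/4) π))), I θ := lintegral_mono_set hsub
    _ ≤ (∫⁻ θ in Ioo (-π) (-π + 3/4), I θ) + ((∫⁻ θ in Icc (-π + 3/4) (-(3/4)), I θ) +
          ((∫⁻ θ in Ioc (-(3/4)) (3/4), I θ) + ((∫⁻ θ in Icc (3/4) (π - 3/4), I θ) +
          (∫⁻ θ in Ioo (π - 3/4) π, I θ)))) := by
        refine (lintegral_union_le _ _ _).trans ?_
        gcongr
        refine (lintegral_union_le _ _ _).trans ?_
        gcongr
        refine (lintegral_union_le _ _ _).trans ?_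
        gcongr
        exact lintegral_union_le _ _ _
    _ ≤ ENNReal.ofReal (44384/10000) + (ENNReal.ofReal (32388/10000) +
          (ENNReal.ofReal (88767/10000) + (ENNReal.ofReal (32388/10000) +
          ENNReal.ofReal (44384/10000)))) := by
        gcongr
        · exact my_piece1 I hI
        · exact my_piece2 I hI
        · exact my_piece3 I hI
        · exact my_piece4 I hI
        · exact my_piece5 I hI
    _ ≤ ENNReal.ofReal (244/10) := by
        rw [← ENNReal.ofReal_add (by norm_num) (by norm_num),
          ← ENNReal.ofReal_add (by norm_num) (by norm_num),
          ← ENNReal.ofReal_add (by norm_num) (by norm_num),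
          ← ENNReal.ofReal_add (by norm_num) (by norm_num)]
        exact ENNReal.ofReal_le_ofReal (by norm_num)

theorem my_plane_bound :
    (∫⁻ p : ℝ × ℝ, ENNReal.ofReal
      (((p.1^2+p.2^2) / ((p.1^2+p.2^2)^2 + p.2^2)) ^ ((4/3):ℝ)))
      ≤ ENNReal.ofReal (244/10) := by
  rw [← my_lintegral_polar]
  have htar : polarCoord.target = Ioi (0:ℝ) ×ˢ Ioo (-π) π := rfl
  have hmeas_tar : MeasurableSet polarCoord.target := measurableSet_Ioi.prod measurableSet_Ioo
  have hcongr : ∀ p ∈ polarCoord.target,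
      ENNReal.ofReal p.1 * ENNReal.ofReal ((((polarCoord.symm p).1^2+(polarCoord.symm p).2^2) /
        (((polarCoord.symm p).1^2+(polarCoord.symm p).2^2)^2 + (polarCoord.symm p).2^2)) ^ ((4/3):ℝ))
      = ENNReal.ofReal (p.1 * ((p.1^2 + Real.sin p.2 ^2) ^ (-(4/3):ℝ))) := by
    rintro ⟨r, θ⟩ hp
    have hr : (0:ℝ) < r := hp.1
    have hsymm : polarCoord.symm (r, θ) = (r * Real.cos θ, r * Real.sin θ) := rfl
    rw [hsymm]
    simp only
    have hx : (r * Real.cos θ)^2 + (r * Real.sin θ)^2 = r^2 := by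
      nlinarith [Real.sin_sq_add_cos_sq θ]
    rw [hx]
    have hX : (0:ℝ) < r^2 + Real.sin θ^2 := by positivity
    have hden : (r^2)^2 + (r * Real.sin θ)^2 = r^2 * (r^2 + Real.sin θ^2) := by ring
    rw [hden]
    have hratio : r^2 / (r^2 * (r^2 + Real.sin θ^2)) = (r^2 + Real.sin θ^2)⁻¹ := by
      rw [show r^2 / (r^2 * (r^2 + Real.sin θ^2)) = r^2 * 1 / (r^2 * (r^2 + Real.sin θ^2))
          by ring, mul_div_mul_left _ _ (by positivity : (r:ℝ)^2 ≠ 0), one_div]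
    rw [hratio, ← ENNReal.ofReal_mul hr.le]
    congr 1
    rw [Real.inv_rpow hX.le, ← Real.rpow_neg hX.le]
  rw [setLIntegral_congr_fun hmeas_tar hcongr, htar,
    Measure.volume_eq_prod, ← Measure.prod_restrict]
  have hmeasF : Measurable (fun p : ℝ × ℝ =>
      ENNReal.ofReal (p.1 * ((p.1^2 + Real.sin p.2 ^2) ^ (-(4/3):ℝ)))) := by
    have hXm : Measurable (fun p : ℝ × ℝ => p.1^2 + Real.sin p.2 ^2) := by
      exact ((measurable_fst.pow_const 2).add ((Real.measurable_sin.comp measurable_snd).pow_const 2))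
    have h1 : (fun p : ℝ × ℝ => (p.1^2 + Real.sin p.2 ^2) ^ (-(4/3):ℝ))
        = fun p : ℝ × ℝ => (((p.1^2 + Real.sin p.2 ^2) ^ ((4/3):ℝ))⁻¹) := by
      funext p
      rw [Real.rpow_neg (by positivity)]
    have h2 : Measurable (fun p : ℝ × ℝ => (p.1^2 + Real.sin p.2 ^2) ^ (-(4/3):ℝ)) := by
      rw [h1]
      exact (((Real.continuous_rpow_const (by norm_num)).measurable).comp hXm).inv
    exact (measurable_fst.mul h2).ennreal_ofReal
  rw [lintegral_prod_symm _ hmeasF.aemeasurable]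
  exact my_theta_total _ (fun θ hθ => inner_radial (Real.sin θ) hθ)

/-- For c ∈ (0,1], the L^{4/3}(ℝ²) norm of L_c(ξ) = |ξ|²/(|ξ|⁴ + |ξ|² − c²ξ₁²)
    is at most 11. -/
theorem stmt0 (c : ℝ) (hc : c ∈ Set.Ioc (0:ℝ) 1)
    (L : EuclideanSpace ℝ (Fin 2) → ℝ)
    (hL : ∀ ξ : EuclideanSpace ℝ (Fin 2),
      L ξ = ‖ξ‖^2 / (‖ξ‖^4 + ‖ξ‖^2 - c^2 * (ξ 0)^2)) :
    eLpNorm L (ENNReal.ofReal (4/3)) volume ≤ (11 : ℝ≥0∞) := by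
  obtain ⟨hc0, hc1⟩ := hc
  have hc2 : c^2 ≤ 1 := by nlinarith
  have hp0 : (ENNReal.ofReal (4/3) : ℝ≥0∞) ≠ 0 := by
    simp only [ne_eq, ENNReal.ofReal_eq_zero, not_le]; norm_num
  have hptop : (ENNReal.ofReal (4/3) : ℝ≥0∞) ≠ ∞ := ENNReal.ofReal_ne_top
  rw [eLpNorm_eq_lintegral_rpow_enorm_toReal hp0 hptop,
    ENNReal.toReal_ofReal (by norm_num : (0:ℝ) ≤ 4/3)]
  have key : (∫⁻ ξ : EuclideanSpace ℝ (Fin 2), (‖L ξ‖₊ : ℝ≥0∞) ^ ((4:ℝ)/3))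
      ≤ ENNReal.ofReal (244/10) := by
    have hpt : ∀ ξ : EuclideanSpace ℝ (Fin 2), (‖L ξ‖₊ : ℝ≥0∞) ^ ((4:ℝ)/3) ≤
        ENNReal.ofReal (((((ξ 0)^2+(ξ 1)^2) / (((ξ 0)^2+(ξ 1)^2)^2 + (ξ 1)^2)) ^ ((4/3):ℝ))) := by
      intro ξ
      have hnorm : ‖ξ‖^2 = (ξ 0)^2 + (ξ 1)^2 := by
        rw [EuclideanSpace.norm_eq, Real.sq_sqrt (by positivity)]
        simp [Fin.sum_univ_two, sq_abs]
      have habs : |L ξ| ≤ ((ξ 0)^2+(ξ 1)^2) / (((ξ 0)^2+(ξ 1)^2)^2 + (ξ 1)^2) := by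
        set N : ℝ := (ξ 0)^2 + (ξ 1)^2 with hN
        have hLxi : L ξ = N / (N^2 + N - c^2 * (ξ 0)^2) := by
          rw [hL ξ, hnorm, show ‖ξ‖^4 = (‖ξ‖^2)^2 by ring, hnorm]
        rcases eq_or_lt_of_le (by positivity : (0:ℝ) ≤ N) with h0 | h0
        · rw [hLxi, ← h0]
          norm_num
        · have hD' : (0:ℝ) < N^2 + (ξ 1)^2 := by positivity
          have hDD : N^2 + (ξ 1)^2 ≤ N^2 + N - c^2 * (ξ 0)^2 := by nlinarith [sq_nonneg (ξ 0)]
          have hD : (0:ℝ) < N^2 + N - c^2 * (ξ 0)^2 := lt_of_lt_of_le hD' hDD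
          rw [hLxi, abs_of_nonneg (by positivity)]
          exact div_le_div_of_nonneg_left (by positivity) hD' hDD
      calc (‖L ξ‖₊ : ℝ≥0∞) ^ ((4:ℝ)/3)
          = (ENNReal.ofReal |L ξ|) ^ ((4:ℝ)/3) := by
            rw [← Real.norm_eq_abs, ofReal_norm]; rfl
        _ = ENNReal.ofReal (|L ξ| ^ ((4:ℝ)/3)) :=
            ENNReal.ofReal_rpow_of_nonneg (abs_nonneg _) (by norm_num)
        _ ≤ _ := by
            apply ENNReal.ofReal_le_ofReal
            exact Real.rpow_le_rpow (abs_nonneg _) habs (by norm_num)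
    refine le_trans (lintegral_mono hpt) ?_
    have hmp := (volume_preserving_finTwoArrow ℝ).comp
      (EuclideanSpace.volume_preserving_symm_measurableEquiv_toLp (Fin 2))
    have hmeasG : Measurable (fun p : ℝ × ℝ => ENNReal.ofReal
        (((p.1^2+p.2^2) / ((p.1^2+p.2^2)^2 + p.2^2)) ^ ((4/3):ℝ))) := by
      have hbase : Measurable (fun p : ℝ × ℝ =>
          (p.1^2+p.2^2) / ((p.1^2+p.2^2)^2 + p.2^2)) := by
        exact ((measurable_fst.pow_const 2).add (measurable_snd.pow_const 2)).div
          ((((measurable_fst.pow_const 2).add (measurable_snd.pow_const 2)).pow_const 2).add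
            (measurable_snd.pow_const 2))
      exact (((Real.continuous_rpow_const (by norm_num)).measurable).comp hbase).ennreal_ofReal
    have htrans := hmp.lintegral_comp hmeasG
    have happ : ∀ ξ : EuclideanSpace ℝ (Fin 2),
        ((MeasurableEquiv.finTwoArrow : (Fin 2 → ℝ) ≃ᵐ ℝ × ℝ) ∘
          (MeasurableEquiv.toLp 2 (Fin 2 → ℝ)).symm) ξ = (ξ 0, ξ 1) := fun ξ => rfl
    simp only [Function.comp_apply] at htrans
    rw [show (fun ξ : EuclideanSpace ℝ (Fin 2) => ENNReal.ofReal
        (((((ξ 0)^2+(ξ 1)^2) / (((ξ 0)^2+(ξ 1)^2)^2 + (ξ 1)^2)) ^ ((4/3):ℝ)))) =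
        (fun ξ : EuclideanSpace ℝ (Fin 2) => ENNReal.ofReal
        (((((MeasurableEquiv.finTwoArrow ((MeasurableEquiv.toLp 2 (Fin 2 → ℝ)).symm ξ)).1^2 +
          (MeasurableEquiv.finTwoArrow ((MeasurableEquiv.toLp 2 (Fin 2 → ℝ)).symm ξ)).2^2) /
          (((MeasurableEquiv.finTwoArrow ((MeasurableEquiv.toLp 2 (Fin 2 → ℝ)).symm ξ)).1^2 +
          (MeasurableEquiv.finTwoArrow ((MeasurableEquiv.toLp 2 (Fin 2 → ℝ)).symm ξ)).2^2)^2 +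
          (MeasurableEquiv.finTwoArrow ((MeasurableEquiv.toLp 2 (Fin 2 → ℝ)).symm ξ)).2^2)) ^
          ((4/3):ℝ)))) from rfl, htrans]
    exact my_plane_bound
  calc (∫⁻ ξ, (‖L ξ‖₊ : ℝ≥0∞) ^ ((4:ℝ)/3)) ^ (1 / ((4:ℝ)/3))
      ≤ (ENNReal.ofReal (244/10)) ^ (1 / ((4:ℝ)/3)) := by
        exact ENNReal.rpow_le_rpow key (by norm_num)
    _ = ENNReal.ofReal ((244/10:ℝ) ^ ((3:ℝ)/4)) := by
        rw [show (1 / ((4:ℝ)/3)) = ((3:ℝ)/4) by norm_num]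
        exact ENNReal.ofReal_rpow_of_nonneg (by norm_num) (by norm_num)
    _ ≤ (11 : ℝ≥0∞) := by
        have h1 : ((244/10:ℝ) ^ ((3:ℝ)/4)) ≤ 11 := by
          have h4 : (((244/10:ℝ) ^ ((3:ℝ)/4)))^(4:ℕ) = (244/10:ℝ)^(3:ℕ) := by
            rw [← Real.rpow_natCast ((244/10:ℝ) ^ ((3:ℝ)/4)) 4, ← Real.rpow_mul (by norm_num),
              show (((3:ℝ)/4) * ((4:ℕ):ℝ)) = ((3:ℕ):ℝ) by push_cast; norm_num,
              Real.rpow_natCast]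
          refine le_of_pow_le_pow_left₀ (n := 4) (by norm_num) (by norm_num) ?_
          rw [h4]; norm_num
        calc ENNReal.ofReal ((244/10:ℝ) ^ ((3:ℝ)/4)) ≤ ENNReal.ofReal 11 :=
              ENNReal.ofReal_le_ofReal h1
          _ = (11 : ℝ≥0∞) := by norm_num
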